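/- (Corollary of Proposition 1 and Remark 1: correctness of the noisy hard label.) Let ε > 0, k, r positive integers, Y a finite nonempty label set, β ∈ (0,1), and α = (2·k·r/ε)·log(|Y|/β). Let a_t : Y → ℝ with true label y* ∈ Y satisfy Gap_t = a_t(y*) − max_{c ≠ y*} a_t(c) ≥ 2α. Let ã_t(c) = a_t(c) + L_c where (L_c)_{c∈Y} are independent Laplace random variables of scale 2·k·r/ε. Then with probability at least 1 − β, y* is the unique maximizer of ã_t, i.e. the estimated hard labeling result equals the true label. -/

import Mathlib

open MeasureTheory Real ProbabilityTheory
open scoped ENNReal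

/-- The Laplace distribution with scale `b > 0`: the measure on `ℝ` with density
`x ↦ (1/(2b))·exp(−|x|/b)` with respect to Lebesgue measure. -/
noncomputable def laplaceMeasure (b : ℝ) : Measure ℝ :=
  volume.withDensity (fun x => ENNReal.ofReal ((1 / (2 * b)) * Real.exp (-|x| / b)))

lemma laplace_tail {b α : ℝ} (hb : 0 < b) (hα : 0 ≤ α) :
    laplaceMeasure b {x : ℝ | α ≤ |x|} ≤ ENNReal.ofReal (Real.exp (-α / b)) := by
  have hSet : {x : ℝ | α ≤ |x|} = Set.Iic (-α) ∪ Set.Ici α := by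
    ext x; simp [le_abs, Set.mem_union, or_comm, le_neg]
  have hdens : Measurable fun x : ℝ =>
      ENNReal.ofReal ((1 / (2 * b)) * Real.exp (-|x| / b)) := by
    apply Measurable.ennreal_ofReal
    exact (measurable_const.mul (((measurable_id.abs.neg).div_const b).exp))
  -- right tail value
  have hIci : laplaceMeasure b (Set.Ici α) = ENNReal.ofReal (Real.exp (-α / b) / 2) := by
    rw [laplaceMeasure, withDensity_apply _ measurableSet_Ici]
    have hcong : ∫⁻ x in Set.Ici α, ENNReal.ofReal ((1 / (2 * b)) * Real.exp (-|x| / b))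
        = ∫⁻ x in Set.Ici α, ENNReal.ofReal ((1 / (2 * b)) * Real.exp (-x / b)) := by
      apply setLIntegral_congr_fun measurableSet_Ici
      intro x hx
      simp only [abs_of_nonneg (le_trans hα hx)]
    rw [hcong]
    have hint : IntegrableOn (fun x : ℝ => (1 / (2 * b)) * Real.exp (-x / b)) (Set.Ici α) := by
      have : IntegrableOn (fun x : ℝ => Real.exp (-(b⁻¹) * x)) (Set.Ioi α) :=
        exp_neg_integrableOn_Ioi α (by positivity)
      have h2 : IntegrableOn (fun x : ℝ => Real.exp (-x / b)) (Set.Ici α) := by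
        rw [integrableOn_Ici_iff_integrableOn_Ioi]
        convert this using 2 with x
        rfl
        ring_nf
      exact h2.const_mul _
    rw [← ofReal_integral_eq_lintegral_ofReal hint]
    · congr 1
      rw [MeasureTheory.integral_Ici_eq_integral_Ioi, integral_const_mul]
      have : (∫ x in Set.Ioi α, Real.exp (-x / b))
          = ∫ x in Set.Ioi α, (fun y => Real.exp (-y)) (b⁻¹ * x) := by
        congr 1 with x; rw [neg_div]; ring_nf
      rw [this, integral_comp_mul_left_Ioi (fun y => Real.exp (-y)) α (by positivity),
        integral_exp_neg_Ioi]
      rw [smul_eq_mul, inv_inv]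
      field_simp
    · filter_upwards with x
      positivity
  -- left tail via symmetry
  have hIic : laplaceMeasure b (Set.Iic (-α)) = laplaceMeasure b (Set.Ici α) := by
    rw [laplaceMeasure, withDensity_apply _ measurableSet_Iic,
      withDensity_apply _ measurableSet_Ici]
    have hmapneg : Measure.map (fun x : ℝ => -x) volume = volume :=
      (Measure.measurePreserving_neg (volume : Measure ℝ)).map_eq
    conv_lhs => rw [← hmapneg]
    rw [setLIntegral_map measurableSet_Iic hdens measurable_neg]
    have : (fun x : ℝ => -x) ⁻¹' Set.Iic (-α) = Set.Ici α := by
      ext x; simp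
    rw [this]
    simp
  calc laplaceMeasure b {x : ℝ | α ≤ |x|}
      ≤ laplaceMeasure b (Set.Iic (-α)) + laplaceMeasure b (Set.Ici α) := by
        rw [hSet]; exact measure_union_le _ _
    _ = ENNReal.ofReal (Real.exp (-α / b)) := by
        rw [hIic, hIci, ← ENNReal.ofReal_add (by positivity) (by positivity)]
        congr 1; ring

/-- Corollary of Proposition 1 and Remark 1: if the count gap of the true label `y*`
satisfies `Gap_t ≥ 2α` with `α = (2kr/ε)·log(|Y|/β)`, and independent Laplace noise of
scale `2kr/ε` is added to each coordinate, then with probability at least `1 − β` the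
true label `y*` is the unique maximizer of the noisy counts. -/
theorem noisy_hard_label_correct
    {Y : Type*} [Fintype Y] [Nonempty Y] [DecidableEq Y]
    {Ωs : Type*} [MeasurableSpace Ωs] (P : Measure Ωs) [IsProbabilityMeasure P]
    (ε : ℝ) (hε : 0 < ε) (k r : ℕ) (hk : 0 < k) (hr : 0 < r)
    (β : ℝ) (hβ : β ∈ Set.Ioo (0 : ℝ) 1)
    (a : Y → ℝ) (ystar : Y)
    (hGap : ∀ c : Y, c ≠ ystar →
      2 * ((2 * k * r / ε) * Real.log (Fintype.card Y / β)) ≤ a ystar - a c)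
    (L : Y → Ωs → ℝ) (hmeas : ∀ c, Measurable (L c))
    (hlaw : ∀ c, Measure.map (L c) P = laplaceMeasure (2 * k * r / ε))
    (hindep : iIndepFun L P) :
    ENNReal.ofReal (1 - β)
      ≤ P {ω | ∀ c : Y, c ≠ ystar → a c + L c ω < a ystar + L ystar ω} := by
  set b : ℝ := 2 * k * r / ε with hbdef
  have hb : 0 < b := by
    have : (0:ℝ) < k := by exact_mod_cast hk
    have : (0:ℝ) < r := by exact_mod_cast hr
    positivity
  set N : ℝ := (Fintype.card Y : ℝ) with hNdef
  have hN1 : (1:ℝ) ≤ N := by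
    rw [hNdef]
    exact_mod_cast Fintype.card_pos (α := Y)
  obtain ⟨hβ0, hβ1⟩ := hβ
  have hNβ : 1 < N / β := by
    rw [lt_div_iff₀ hβ0]; nlinarith
  set α : ℝ := b * Real.log (N / β) with hαdef
  have hα : 0 < α := by
    have := Real.log_pos hNβ
    positivity
  -- bad events
  set A : Y → Set Ωs := fun c => {ω | α ≤ |L c ω|} with hAdef
  have hAmeas : ∀ c, MeasurableSet (A c) := by
    intro c
    exact measurableSet_le measurable_const (hmeas c).abs
  have htail : ∀ c, P (A c) ≤ ENNReal.ofReal (β / N) := by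
    intro c
    have hs : MeasurableSet {x : ℝ | α ≤ |x|} :=
      measurableSet_le measurable_const continuous_abs.measurable
    have h1 : P (A c) = (Measure.map (L c) P) {x : ℝ | α ≤ |x|} := by
      rw [Measure.map_apply (hmeas c) hs]
      rfl
    rw [h1, hlaw c]
    have h2 := laplace_tail hb hα.le
    have h3 : Real.exp (-α / b) = β / N := by
      rw [hαdef]
      rw [show -(b * Real.log (N / β)) / b = -Real.log (N / β) by field_simp]
      rw [Real.exp_neg, Real.exp_log (by positivity), inv_div]
    rw [← h3]
    exact h2
  have hUnion : P (⋃ c, A c) ≤ ENNReal.ofReal β := by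
    calc P (⋃ c, A c) ≤ ∑ c : Y, P (A c) := measure_iUnion_fintype_le _ _
      _ ≤ ∑ _c : Y, ENNReal.ofReal (β / N) := Finset.sum_le_sum fun c _ => htail c
      _ = (Fintype.card Y : ℝ≥0∞) * ENNReal.ofReal (β / N) := by
          simp [Finset.sum_const, nsmul_eq_mul]
      _ = ENNReal.ofReal β := by
          have hcast : ((Fintype.card Y : ℝ≥0∞)) = ENNReal.ofReal N := by
            simp [hNdef]
          rw [hcast, ← ENNReal.ofReal_mul (by positivity)]
          congr 1
          field_simp
  have hsub : (⋃ c, A c)ᶜ ⊆ {ω | ∀ c : Y, c ≠ ystar → a c + L c ω < a ystar + L ystar ω} := by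
    intro ω hω c hc
    simp only [Set.mem_compl_iff, Set.mem_iUnion, not_exists] at hω
    have h1 : |L c ω| < α := not_le.mp (hω c)
    have h2 : |L ystar ω| < α := not_le.mp (hω ystar)
    have hg := hGap c hc
    have hb1 := abs_lt.mp h1
    have hb2 := abs_lt.mp h2
    have : 2 * α ≤ a ystar - a c := hg
    linarith [hb1.2, hb2.1]
  calc ENNReal.ofReal (1 - β) = 1 - ENNReal.ofReal β := by
        rw [ENNReal.ofReal_sub 1 hβ0.le, ENNReal.ofReal_one]
    _ ≤ 1 - P (⋃ c, A c) := by
        exact tsub_le_tsub_left hUnion 1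
    _ = P ((⋃ c, A c)ᶜ) := by
        rw [measure_compl (MeasurableSet.iUnion hAmeas) (measure_ne_top P _),
          measure_univ]
    _ ≤ _ := measure_mono hsub
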